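/- Let R = Z[λ^{±1}, μ^{±1}] be the Laurent polynomial ring in two commuting variables and I the principal ideal generated by (λ − 1)(μ − 1). Then the Z-linear map Z[λ^{±1}] ⊕ Z[μ^{±1}] → R/I sending (α, β) to the class of α + (μ − 1)β is an isomorphism of Z-modules. -/

import Mathlib

private lemma one_eq_single {G : Type*} [AddMonoid G] :
    (1 : AddMonoidAlgebra ℤ G) = AddMonoidAlgebra.single (0 : G) 1 :=
  AddMonoidAlgebra.one_def

private lemma dvd_single_sub_one (n : ℤ) :
    (AddMonoidAlgebra.single (1:ℤ) (1:ℤ) - 1 : AddMonoidAlgebra ℤ ℤ)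
      ∣ (AddMonoidAlgebra.single n 1 - 1) := by
  induction n using Int.induction_on with
  | zero => rw [one_eq_single]; simp
  | succ k ih =>
    have hs : (AddMonoidAlgebra.single ((k:ℤ)+1) (1:ℤ) - 1 : AddMonoidAlgebra ℤ ℤ)
        = AddMonoidAlgebra.single 1 1 * (AddMonoidAlgebra.single (k:ℤ) 1 - 1)
          + (AddMonoidAlgebra.single 1 1 - 1) := by
      rw [mul_sub, AddMonoidAlgebra.single_mul_single]
      ring_nf
    rw [hs]
    exact dvd_add (ih.mul_left _) dvd_rfl
  | pred k ih =>
    have hneg : (AddMonoidAlgebra.single (1:ℤ) (1:ℤ) - 1 : AddMonoidAlgebra ℤ ℤ)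
        ∣ (AddMonoidAlgebra.single (-1 : ℤ) 1 - 1) := by
      refine ⟨-AddMonoidAlgebra.single (-1 : ℤ) 1, ?_⟩
      rw [mul_neg, sub_mul, AddMonoidAlgebra.single_mul_single, one_mul, one_eq_single,
        AddMonoidAlgebra.single_mul_single]
      norm_num
    have hs : (AddMonoidAlgebra.single (-(k:ℤ)-1) (1:ℤ) - 1 : AddMonoidAlgebra ℤ ℤ)
        = AddMonoidAlgebra.single (-1) 1 * (AddMonoidAlgebra.single (-(k:ℤ)) 1 - 1)
          + (AddMonoidAlgebra.single (-1) 1 - 1) := by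
      rw [mul_sub, AddMonoidAlgebra.single_mul_single]
      ring_nf
    rw [hs]
    exact dvd_add (ih.mul_left _) hneg

private lemma sne : (AddMonoidAlgebra.single (1:ℤ) (1:ℤ) - 1 : AddMonoidAlgebra ℤ ℤ) ≠ 0 := by
  intro h
  rw [one_eq_single, sub_eq_zero] at h
  simpa using (AddMonoidAlgebra.single_left_inj one_ne_zero).mp h

private lemma mdr_single {G H : Type*} [AddMonoid G] [AddMonoid H] (f : G →+ H) (a : G) (c : ℤ) :
    AddMonoidAlgebra.mapDomainRingHom ℤ f (AddMonoidAlgebra.single a c)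
    = AddMonoidAlgebra.single (f a) c :=
  AddMonoidAlgebra.mapDomain_single

private lemma mdr_comp {G H : Type*} [AddMonoid G] [AddMonoid H] (f : G →+ H) (g : H →+ G)
    (h : ∀ x, g (f x) = x) (a : AddMonoidAlgebra ℤ G) :
    AddMonoidAlgebra.mapDomainRingHom ℤ g (AddMonoidAlgebra.mapDomainRingHom ℤ f a) = a := by
  induction a using AddMonoidAlgebra.induction_linear with
  | zero => rw [map_zero, map_zero]
  | add x y hx hy => rw [map_add, map_add, hx, hy]
  | single m r => rw [mdr_single, mdr_single, h]

/-- `ℤ[λ^{±1}] ⊕ ℤ[μ^{±1}] → ℤ[λ^{±1},μ^{±1}]/((λ-1)(μ-1))`, `(α,β) ↦ α + (μ-1)β`,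
is a `ℤ`-module isomorphism. -/
theorem stmt_7
    (I : Ideal (AddMonoidAlgebra ℤ (ℤ × ℤ)))
    (hI : I = Ideal.span
      {(AddMonoidAlgebra.single ((1 : ℤ), (0 : ℤ)) (1 : ℤ) - 1) *
        (AddMonoidAlgebra.single ((0 : ℤ), (1 : ℤ)) (1 : ℤ) - 1)}) :
    Function.Bijective (fun p : AddMonoidAlgebra ℤ ℤ × AddMonoidAlgebra ℤ ℤ =>
      Ideal.Quotient.mk I
        (AddMonoidAlgebra.mapDomainRingHom ℤ (AddMonoidHom.inl ℤ ℤ) p.1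
          + (AddMonoidAlgebra.single ((0 : ℤ), (1 : ℤ)) (1 : ℤ) - 1)
            * AddMonoidAlgebra.mapDomainRingHom ℤ (AddMonoidHom.inr ℤ ℤ) p.2)) := by
  set j1 := AddMonoidAlgebra.mapDomainRingHom ℤ (AddMonoidHom.inl ℤ ℤ) with hj1
  set j2 := AddMonoidAlgebra.mapDomainRingHom ℤ (AddMonoidHom.inr ℤ ℤ) with hj2
  set e1 := AddMonoidAlgebra.mapDomainRingHom (M := ℤ × ℤ) ℤ (AddMonoidHom.fst ℤ ℤ) with he1
  set e2 := AddMonoidAlgebra.mapDomainRingHom (M := ℤ × ℤ) ℤ (AddMonoidHom.snd ℤ ℤ) with he2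
  set L : AddMonoidAlgebra ℤ (ℤ × ℤ) :=
    AddMonoidAlgebra.single ((1 : ℤ), (0 : ℤ)) (1 : ℤ) - 1 with hL
  set M : AddMonoidAlgebra ℤ (ℤ × ℤ) :=
    AddMonoidAlgebra.single ((0 : ℤ), (1 : ℤ)) (1 : ℤ) - 1 with hM
  have he1M : e1 M = 0 := by
    rw [hM, map_sub, map_one, mdr_single, one_eq_single]
    norm_num
  have he2L : e2 L = 0 := by
    rw [hL, map_sub, map_one, mdr_single, one_eq_single]
    norm_num
  have he2M : e2 M = AddMonoidAlgebra.single (1:ℤ) (1:ℤ) - 1 := by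
    rw [hM, map_sub, map_one, mdr_single]
    rfl
  have hc1 : ∀ a, e1 (j1 a) = a := mdr_comp _ _ (fun x => rfl)
  have hc2 : ∀ a, e2 (j2 a) = a := mdr_comp _ _ (fun x => rfl)
  constructor
  · -- injectivity
    intro p q h
    simp only at h
    rw [Ideal.Quotient.eq, hI, Ideal.mem_span_singleton] at h
    obtain ⟨w, hw⟩ := h
    rw [show j1 p.1 + M * j2 p.2 - (j1 q.1 + M * j2 q.2)
        = j1 (p.1 - q.1) + M * j2 (p.2 - q.2) by rw [map_sub, map_sub]; ring] at hw
    have h1 := congrArg e1 hw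
    rw [map_add, map_mul, map_mul, map_mul, he1M, hc1, zero_mul, mul_zero, add_zero,
      zero_mul] at h1
    have h2 := congrArg e2 hw
    rw [map_add, map_mul, map_mul, map_mul, he2L, he2M, hc2, h1] at h2
    simp only [map_zero, zero_add, zero_mul] at h2
    have hb : p.2 - q.2 = 0 := by
      rcases mul_eq_zero.mp h2 with h | h
      · exact absurd h sne
      · exact h
    exact Prod.ext (sub_eq_zero.mp h1) (sub_eq_zero.mp hb)
  · -- surjectivity
    have key : ∀ r : AddMonoidAlgebra ℤ (ℤ × ℤ), ∃ p : AddMonoidAlgebra ℤ ℤ × AddMonoidAlgebra ℤ ℤ,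
        Ideal.Quotient.mk I (j1 p.1 + M * j2 p.2) = Ideal.Quotient.mk I r := by
      intro r
      induction r using AddMonoidAlgebra.induction_linear with
      | zero => exact ⟨(0, 0), by simp⟩
      | add f g hf hg =>
        obtain ⟨p, hp⟩ := hf
        obtain ⟨q, hq⟩ := hg
        refine ⟨(p.1 + q.1, p.2 + q.2), ?_⟩
        rw [show j1 (p.1 + q.1) + M * j2 (p.2 + q.2)
            = (j1 p.1 + M * j2 p.2) + (j1 q.1 + M * j2 q.2) by rw [map_add, map_add]; ring,
          map_add, hp, hq, ← map_add]
      | single ab c =>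
        obtain ⟨a, b⟩ := ab
        obtain ⟨u1, hu1⟩ := dvd_single_sub_one a
        obtain ⟨u2, hu2⟩ := dvd_single_sub_one b
        refine ⟨(AddMonoidAlgebra.single a c, u2 * AddMonoidAlgebra.single 0 c), ?_⟩
        rw [Ideal.Quotient.eq, hI, Ideal.mem_span_singleton]
        refine ⟨-(j1 u1 * j2 u2 * AddMonoidAlgebra.single ((0:ℤ),(0:ℤ)) c), ?_⟩
        have ha : (AddMonoidAlgebra.single ((a:ℤ),(0:ℤ)) (1:ℤ) : AddMonoidAlgebra ℤ (ℤ × ℤ))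
            = 1 + L * j1 u1 := by
          have h := congrArg j1 hu1
          rw [map_sub, map_one, map_mul, map_sub, map_one, mdr_single, mdr_single] at h
          rw [show ((AddMonoidHom.inl ℤ ℤ) a) = ((a:ℤ),(0:ℤ)) from rfl,
            show ((AddMonoidHom.inl ℤ ℤ) (1:ℤ)) = ((1:ℤ),(0:ℤ)) from rfl] at h
          rw [hL]
          linear_combination h
        have hb : (AddMonoidAlgebra.single ((0:ℤ),(b:ℤ)) (1:ℤ) : AddMonoidAlgebra ℤ (ℤ × ℤ))
            = 1 + M * j2 u2 := by
          have := congrArg j2 hu2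
          rw [map_sub, map_one, map_mul, map_sub, map_one, mdr_single, mdr_single] at this
          rw [show (AddMonoidAlgebra.single ((0:ℤ),(b:ℤ)) (1:ℤ) : AddMonoidAlgebra ℤ (ℤ × ℤ))
            = 1 + (AddMonoidAlgebra.single ((0:ℤ),(b:ℤ)) (1:ℤ) - 1) by ring]
          rw [show ((AddMonoidHom.inr ℤ ℤ) b) = ((0:ℤ),(b:ℤ)) from rfl,
            show ((AddMonoidHom.inr ℤ ℤ) 1) = ((0:ℤ),(1:ℤ)) from rfl] at this
          rw [this, hM]
        have h3 : j1 (AddMonoidAlgebra.single a c)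
            = AddMonoidAlgebra.single ((a:ℤ),(0:ℤ)) 1 * AddMonoidAlgebra.single ((0:ℤ),(0:ℤ)) c := by
          rw [mdr_single, AddMonoidAlgebra.single_mul_single,
            show ((AddMonoidHom.inl ℤ ℤ) a) = ((a:ℤ),(0:ℤ)) from rfl]
          norm_num
        have h4 : (AddMonoidAlgebra.single ((a:ℤ),(b:ℤ)) c : AddMonoidAlgebra ℤ (ℤ × ℤ))
            = AddMonoidAlgebra.single ((a:ℤ),(0:ℤ)) 1 * AddMonoidAlgebra.single ((0:ℤ),(b:ℤ)) 1
              * AddMonoidAlgebra.single ((0:ℤ),(0:ℤ)) c := by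
          rw [AddMonoidAlgebra.single_mul_single, AddMonoidAlgebra.single_mul_single]
          norm_num
        have h5 : j2 (u2 * AddMonoidAlgebra.single 0 c)
            = j2 u2 * AddMonoidAlgebra.single ((0:ℤ),(0:ℤ)) c := by
          rw [map_mul, mdr_single]
          rfl
        show j1 (AddMonoidAlgebra.single a c) + M * j2 (u2 * AddMonoidAlgebra.single 0 c)
            - AddMonoidAlgebra.single ((a:ℤ),(b:ℤ)) c
            = L * M * -(j1 u1 * j2 u2 * AddMonoidAlgebra.single ((0:ℤ),(0:ℤ)) c)
        rw [h3, h4, h5, ha, hb]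
        ring
    intro y
    obtain ⟨r, rfl⟩ := Ideal.Quotient.mk_surjective y
    obtain ⟨p, hp⟩ := key r
    exact ⟨p, hp⟩
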